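/- arXiv:1903.10413 — 5 statements merged into one kernel-verified Lean document; each statement's English description precedes it below -/
import Mathlib

section
/- Let n > m ≥ 1, l = lcm(n,m). Let α be a multiplicative character of k_n^× whose Frobenius orbit has size exactly n, and β a multiplicative character of k_m^× whose Frobenius orbit has size exactly m. Then for all 0 ≤ i < n and 0 ≤ j < m, the character of k_l^× given by x ↦ α(N_{k_l/k_n}(x)^{q^i})·β(N_{k_l/k_m}(x)^{q^j}) is nontrivial. -/
open Finset

lemma geom_sum_nat' {q : ℕ} (hq : 1 ≤ q) (d : ℕ) :
    (∑ k ∈ Finset.range d, q ^ k) * (q - 1) = q ^ d - 1 := by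
  induction d with
  | zero => simp
  | succ d ih =>
    rw [Finset.sum_range_succ, add_mul, ih, pow_succ, Nat.mul_sub]
    have h1 : 1 ≤ q ^ d := Nat.one_le_pow _ _ hq
    have h2 : q ^ d ≤ q ^ d * q := Nat.le_mul_of_pos_right _ (by omega)
    omega

/-- For finite fields, the units-level norm map is surjective. -/
lemma norm_units_surjective (K L : Type*) [Field K] [Field L] [Fintype K] [Fintype L]
    [Algebra K L] :
    Function.Surjective (Units.map (Algebra.norm K : L →* K)) := by
  classical
  set d := Module.finrank K L with hd
  have hd0 : 0 < d := Module.finrank_pos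
  have hcard : Fintype.card L = Fintype.card K ^ d := by
    have := Module.card_fintype (Module.finBasis K L)
    simpa using this
  set q := Fintype.card K with hq
  have hq2 : 2 ≤ q := Fintype.one_lt_card
  obtain ⟨p, hpchar⟩ := CharP.exists K
  haveI : CharP K p := hpchar
  haveI : CharP L p := charP_of_injective_algebraMap' K (A := L) p
  obtain ⟨s, hp, hs⟩ := FiniteField.card K p
  haveI : Fact p.Prime := ⟨hp⟩
  have hcommutes : ∀ y : K, (iterateFrobenius L p s) (algebraMap K L y) = algebraMap K L y := by
    intro y
    rw [iterateFrobenius_def, ← map_pow, ← hs, FiniteField.pow_card]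
  let φhom : L →ₐ[K] L := { (iterateFrobenius L p s) with commutes' := hcommutes }
  have hφbij : Function.Bijective φhom :=
    Finite.injective_iff_bijective.mp (iterateFrobenius L p s).injective
  let φ : L ≃ₐ[K] L := AlgEquiv.ofBijective φhom hφbij
  have hφ : ∀ x : L, φ x = x ^ q := by
    intro x
    show (iterateFrobenius L p s) x = x ^ q
    rw [iterateFrobenius_def, hq, hs]
  have hφpow : ∀ (k : ℕ) (x : L), (φ ^ k) x = x ^ q ^ k := by
    intro k
    induction k with
    | zero => intro x; simp
    | succ k ih =>
      intro x
      rw [pow_succ, AlgEquiv.mul_apply, hφ, ih, ← pow_mul, pow_succ']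
  obtain ⟨g, hg⟩ := IsCyclic.exists_generator (α := Lˣ)
  have horder : orderOf g = q ^ d - 1 := by
    rw [orderOf_eq_card_of_forall_mem_zpowers hg, Nat.card_eq_fintype_card,
      Fintype.card_units, hcard]
  -- injectivity of Frobenius powers
  have key : ∀ a b : Fin d, (a : ℕ) ≤ (b : ℕ) → φ ^ (a : ℕ) = φ ^ (b : ℕ) → a = b := by
    intro a b hle hab
    have hval : (g : L) ^ q ^ (a : ℕ) = (g : L) ^ q ^ (b : ℕ) := by
      have := congrArg (fun σ : L ≃ₐ[K] L => σ (g : L)) hab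
      simpa [hφpow] using this
    have hu : g ^ q ^ (a : ℕ) = g ^ q ^ (b : ℕ) :=
      Units.ext (by simpa [Units.val_pow_eq_pow_val] using hval)
    have hmod : q ^ (a : ℕ) ≡ q ^ (b : ℕ) [MOD orderOf g] :=
      pow_eq_pow_iff_modEq.mp hu
    have hdvd : ((q ^ d - 1 : ℕ) : ℤ) ∣ ((q ^ (b : ℕ) : ℕ) : ℤ) - ((q ^ (a : ℕ) : ℕ) : ℤ) := by
      have := hmod.dvd
      rwa [horder] at this
    have h1 : (q : ℕ) ^ (a : ℕ) ≤ q ^ (b : ℕ) := Nat.pow_le_pow_right (by omega) hle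
    have h0 : ((q ^ (b : ℕ) : ℕ) : ℤ) - ((q ^ (a : ℕ) : ℕ) : ℤ) = 0 := by
      by_contra hne
      have hpos : 0 < ((q ^ (b : ℕ) : ℕ) : ℤ) - ((q ^ (a : ℕ) : ℕ) : ℤ) := by
        have hcast : ((q ^ (a : ℕ) : ℕ) : ℤ) ≤ ((q ^ (b : ℕ) : ℕ) : ℤ) := by exact_mod_cast h1
        omega
      have hle2 := Int.le_of_dvd hpos hdvd
      have hb : q ^ (b : ℕ) < q ^ d := Nat.pow_lt_pow_right (by omega) b.isLt
      have ha : 1 ≤ q ^ (a : ℕ) := Nat.one_le_pow _ _ (by omega)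
      have hqd : 1 ≤ q ^ d := Nat.one_le_pow _ _ (by omega)
      have : ((q ^ d - 1 : ℕ) : ℤ) = (q ^ d : ℕ) - 1 := by
        push_cast [hqd]; ring
      rw [this] at hle2
      have hb' : ((q ^ (b : ℕ) : ℕ) : ℤ) < ((q ^ d : ℕ) : ℤ) := by exact_mod_cast hb
      have ha' : (1 : ℤ) ≤ ((q ^ (a : ℕ) : ℕ) : ℤ) := by exact_mod_cast ha
      linarith
    have : q ^ (a : ℕ) = q ^ (b : ℕ) := by omega
    exact Fin.ext (Nat.pow_right_injective hq2 this)
  have hinj : Function.Injective (fun k : Fin d => φ ^ (k : ℕ)) := by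
    intro a b hab
    rcases le_total (a : ℕ) (b : ℕ) with h | h
    · exact key a b h hab
    · exact (key b a h hab.symm).symm
  have hbij : Function.Bijective (fun k : Fin d => φ ^ (k : ℕ)) := by
    rw [Fintype.bijective_iff_injective_and_card]
    exact ⟨hinj, by rw [Fintype.card_fin, ← Nat.card_eq_fintype_card, IsGalois.card_aut_eq_finrank]⟩
  set e := ∑ k ∈ range d, q ^ k with he
  have hnorm : ∀ x : L, algebraMap K L (Algebra.norm K x) = x ^ e := by
    intro x
    rw [Algebra.norm_eq_prod_automorphisms]
    rw [← Fintype.prod_bijective _ hbij _ (fun σ : L ≃ₐ[K] L => σ x) (fun k => rfl)]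
    simp only [hφpow]
    rw [Finset.prod_pow_eq_pow_sum]
    congr 1
    rw [he, ← Fin.sum_univ_eq_sum_range]
  have hgeom : e * (q - 1) = q ^ d - 1 := geom_sum_nat' (by omega) d
  intro y
  obtain ⟨t, ht⟩ : ∃ t : ℕ, g ^ t = Units.map (algebraMap K L : K →* L) y := by
    have := hg (Units.map (algebraMap K L : K →* L) y)
    rwa [← mem_powers_iff_mem_zpowers, Submonoid.mem_powers_iff] at this
  have hy1 : (Units.map (algebraMap K L : K →* L) y) ^ (q - 1) = 1 := by
    have h1 : y ^ (q - 1) = 1 := by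
      rw [hq, ← Fintype.card_units]
      exact pow_card_eq_one
    rw [← map_pow, h1, map_one]
  have hdvd : e ∣ t := by
    have h1 : g ^ (t * (q - 1)) = 1 := by rw [pow_mul, ht, hy1]
    have h2 : q ^ d - 1 ∣ t * (q - 1) := horder ▸ orderOf_dvd_of_pow_eq_one h1
    rw [← hgeom] at h2
    exact (Nat.mul_dvd_mul_iff_right (by omega : 0 < q - 1)).mp h2
  obtain ⟨c, rfl⟩ := hdvd
  refine ⟨g ^ c, Units.ext ?_⟩
  simp only [Units.coe_map, MonoidHom.coe_coe]
  apply (algebraMap K L).injective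
  rw [hnorm, ← Units.val_pow_eq_pow_val, ← pow_mul, mul_comm c e, ht]
  rfl

/-- for `n > m ≥ 1`, `l = lcm(n,m)`, `α` of orbit size `n`, `β` of orbit size
`m`, the character `x ↦ α(N_{k_l/k_n}(x)^{q^i})·β(N_{k_l/k_m}(x)^{q^j})` of `k_l^×`
is nontrivial for all `0 ≤ i < n`, `0 ≤ j < m`. -/
theorem stmt11 (km kn kl : Type*) [Field km] [Field kn] [Field kl]
    [Fintype km] [Fintype kn] [Fintype kl]
    [Algebra km kl] [Algebra kn kl]
    (q n m l : ℕ) (hnm : n > m) (hm1 : 1 ≤ m) (hl : l = Nat.lcm n m)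
    (hqm : Fintype.card km = q ^ m) (hqn : Fintype.card kn = q ^ n)
    (hql : Fintype.card kl = q ^ l)
    (α : knˣ →* ℂˣ) (hα : ∀ j : ℕ, 0 < j → j < n → α.comp (powMonoidHom (q ^ j)) ≠ α)
    (β : kmˣ →* ℂˣ) (hβ : ∀ j : ℕ, 0 < j → j < m → β.comp (powMonoidHom (q ^ j)) ≠ β) :
    ∀ i < n, ∀ j < m,
      (α.comp (powMonoidHom (q ^ i))).comp (Units.map (Algebra.norm kn : kl →* kn)) *
        (β.comp (powMonoidHom (q ^ j))).comp (Units.map (Algebra.norm km : kl →* km)) ≠ 1 := by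
  classical
  intro i hi j hj h
  have hq2 : 2 ≤ q := by
    by_contra hq
    have h1 : q ^ m ≤ 1 := by
      calc q ^ m ≤ 1 ^ m := Nat.pow_le_pow_left (by omega) m
        _ = 1 := one_pow m
    have h2 := Fintype.one_lt_card (α := km)
    rw [hqm] at h2
    omega
  set Nn : klˣ →* knˣ := Units.map (Algebra.norm kn : kl →* kn) with hNn
  set Nm : klˣ →* kmˣ := Units.map (Algebra.norm km : kl →* km) with hNm
  have key : ∀ x : klˣ, α ((Nn x) ^ q ^ i) * β ((Nm x) ^ q ^ j) = 1 := by
    intro x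
    have := DFunLike.congr_fun h x
    simpa [MonoidHom.mul_apply, MonoidHom.comp_apply, powMonoidHom_apply] using this
  have hfix : ∀ u : kmˣ, u ^ q ^ m = u := by
    intro u
    apply Units.ext
    rw [Units.val_pow_eq_pow_val, ← hqm, FiniteField.pow_card]
  have key2 : ∀ x : klˣ, α (((Nn x) ^ q ^ i) ^ q ^ m) = α ((Nn x) ^ q ^ i) := by
    intro x
    have h1 := key (x ^ q ^ m)
    rw [show Nn (x ^ q ^ m) = (Nn x) ^ q ^ m from map_pow Nn x (q ^ m),
      show Nm (x ^ q ^ m) = (Nm x) ^ q ^ m from map_pow Nm x (q ^ m),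
      hfix (Nm x), pow_right_comm] at h1
    have h2 := key x
    exact mul_right_cancel (h1.trans h2.symm)
  have hns := norm_units_surjective kn kl
  have key3 : ∀ y : knˣ, α ((y ^ q ^ i) ^ q ^ m) = α (y ^ q ^ i) := by
    intro y
    obtain ⟨x, rfl⟩ := hns y
    exact key2 x
  have hcop : (Nat.card knˣ).Coprime (q ^ i) := by
    have hbase : Nat.Coprime q (q ^ n - 1) := by
      have h2 : 1 ≤ q ^ n := Nat.one_le_pow _ _ (by omega)
      have h1 : Nat.Coprime (q ^ n) (q ^ n - 1) := by
        have h3 : q ^ n = (q ^ n - 1) + 1 := by omega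
        rw [h3]
        simp
      exact Nat.Coprime.coprime_dvd_left (dvd_pow_self q (by omega : n ≠ 0)) h1
    have hcu : Nat.card knˣ = q ^ n - 1 := by
      rw [Nat.card_eq_fintype_card, Fintype.card_units, hqn]
    rw [hcu]
    exact hbase.symm.pow_right i
  have hpsurj : Function.Surjective (fun y : knˣ => y ^ q ^ i) := fun z =>
    ⟨(powCoprime hcop).symm z, (powCoprime hcop).apply_symm_apply z⟩
  have key4 : α.comp (powMonoidHom (q ^ m)) = α := by
    ext z
    obtain ⟨y, rfl⟩ := hpsurj z
    simpa using congrArg Units.val (key3 y)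
  exact hα m hm1 hnm key4
end

section
/- Let n = 2m and let α be a multiplicative character of the finite field k_n of cardinality q^n such that α^{1+q^m} = 1 (the trivial character) and such that the Frobenius orbit of α has size exactly 2m (i.e., α^{q^j} ≠ α for 0 < j < 2m). Then for 0 ≤ i < j < 2m, the character α^{q^i + q^j} is trivial if and only if j = i + m. In particular there are exactly m such pairs (i,j). -/
open scoped Classical

/-- for `n = 2m`, `α` with trivial `α^{1+q^m}` and Frobenius orbit of size
exactly `2m`, and `0 ≤ i < j < 2m`, the character `α^{q^i+q^j}` is trivial iff `j = i + m`;
in particular there are exactly `m` such pairs. -/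
theorem stmt12 (K : Type*) [Field K] [Fintype K] (q m : ℕ) (hm : 0 < m)
    (hcard : Fintype.card K = q ^ (2 * m)) (α : Kˣ →* ℂˣ)
    (htriv : α * α.comp (powMonoidHom (q ^ m)) = 1)
    (horb : ∀ j : ℕ, 0 < j → j < 2 * m → α.comp (powMonoidHom (q ^ j)) ≠ α) :
    (∀ i j : ℕ, i < j → j < 2 * m →
      (α.comp (powMonoidHom (q ^ i)) * α.comp (powMonoidHom (q ^ j)) = 1 ↔ j = i + m)) ∧
    ((Finset.range (2 * m) ×ˢ Finset.range (2 * m)).filter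
        (fun p => p.1 < p.2 ∧
          α.comp (powMonoidHom (q ^ p.1)) * α.comp (powMonoidHom (q ^ p.2)) = 1)).card
      = m := by
  have hq : 0 < q := by
    rcases Nat.eq_zero_or_pos q with h | h
    · exfalso
      have hpos := Fintype.card_pos (α := K)
      rw [hcard, h, Nat.zero_pow (by omega)] at hpos
      omega
    · exact h
  -- key: raising to q^(2m+a) is the same as raising to q^a
  have hpow : ∀ (x : Kˣ) (a : ℕ), x ^ q ^ (2 * m + a) = x ^ q ^ a := by
    intro x a
    have hcardu : Fintype.card Kˣ = q ^ (2 * m) - 1 := by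
      rw [Fintype.card_units, hcard]
    have h1 : q ^ (2 * m) = Fintype.card Kˣ + 1 := by
      have : 1 ≤ q ^ (2 * m) := Nat.one_le_pow _ _ hq
      omega
    calc x ^ q ^ (2 * m + a) = (x ^ q ^ (2 * m)) ^ q ^ a := by
          rw [← pow_mul, pow_add]
      _ = x ^ q ^ a := by rw [h1, pow_succ, pow_card_eq_one, one_mul]
  have hpow0 : ∀ x : Kˣ, x ^ q ^ (2 * m) = x := by
    intro x
    have := hpow x 0
    simpa using this
  have htriv' : ∀ x : Kˣ, α x * α (x ^ q ^ m) = 1 := by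
    intro x
    have := DFunLike.congr_fun htriv x
    simpa using this
  have main : ∀ i j : ℕ, i < j → j < 2 * m →
      (α.comp (powMonoidHom (q ^ i)) * α.comp (powMonoidHom (q ^ j)) = 1 ↔ j = i + m) := by
    intro i j hij hj
    constructor
    · intro h
      set d := j - i with hd
      have hd1 : 0 < d := by omega
      have hd2 : d < 2 * m := by omega
      -- pointwise: α x * α (x ^ q^d) = 1
      have h' : ∀ x : Kˣ, α x * α (x ^ q ^ d) = 1 := by
        intro x
        have := DFunLike.congr_fun h (x ^ q ^ (2 * m - i))
        simp only [MonoidHom.mul_apply, MonoidHom.comp_apply, powMonoidHom_apply,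
          MonoidHom.one_apply] at this
        have e1 : (x ^ q ^ (2 * m - i)) ^ q ^ i = x := by
          rw [← pow_mul, ← pow_add]
          have e : 2 * m - i + i = 2 * m := by omega
          rw [e, hpow0]
        have e2 : (x ^ q ^ (2 * m - i)) ^ q ^ j = x ^ q ^ d := by
          rw [← pow_mul, ← pow_add]
          have e : 2 * m - i + j = 2 * m + d := by omega
          rw [e, hpow]
        rwa [e1, e2] at this
      -- hence α (x ^ q^d) = α (x ^ q^m) for all x
      have heq : ∀ x : Kˣ, α (x ^ q ^ d) = α (x ^ q ^ m) := by
        intro x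
        have h1 := h' x
        have h2 := htriv' x
        have : α x * α (x ^ q ^ d) = α x * α (x ^ q ^ m) := by rw [h1, h2]
        exact mul_left_cancel this
      by_contra hne
      have hdm : d ≠ m := by omega
      rcases lt_or_gt_of_ne hdm with hlt | hgt
      · -- d < m : α (y ^ q ^ (m - d)) = α y for all y
        apply horb (m - d) (by omega) (by omega)
        ext y
        simp only [MonoidHom.comp_apply, powMonoidHom_apply]
        have := heq (y ^ q ^ (2 * m - d))
        have e1 : (y ^ q ^ (2 * m - d)) ^ q ^ d = y := by
          rw [← pow_mul, ← pow_add]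
          have e : 2 * m - d + d = 2 * m := by omega
          rw [e, hpow0]
        have e2 : (y ^ q ^ (2 * m - d)) ^ q ^ m = y ^ q ^ (m - d) := by
          rw [← pow_mul, ← pow_add]
          have e : 2 * m - d + m = 2 * m + (m - d) := by omega
          rw [e, hpow]
        rw [e1, e2] at this
        exact_mod_cast this.symm
      · -- d > m : α (y ^ q ^ (d - m)) = α y for all y
        apply horb (d - m) (by omega) (by omega)
        ext y
        simp only [MonoidHom.comp_apply, powMonoidHom_apply]
        have := heq (y ^ q ^ m)
        have e1 : (y ^ q ^ m) ^ q ^ d = y ^ q ^ (d - m) := by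
          rw [← pow_mul, ← pow_add]
          have e : m + d = 2 * m + (d - m) := by omega
          rw [e, hpow]
        have e2 : (y ^ q ^ m) ^ q ^ m = y := by
          rw [← pow_mul, ← pow_add]
          have e : m + m = 2 * m := by omega
          rw [e, hpow0]
        rw [e1, e2] at this
        exact_mod_cast this
    · rintro rfl
      ext x
      simp only [MonoidHom.mul_apply, MonoidHom.comp_apply, powMonoidHom_apply,
        MonoidHom.one_apply]
      have e : x ^ q ^ (i + m) = (x ^ q ^ i) ^ q ^ m := by
        rw [← pow_mul, ← pow_add]
      rw [e]
      exact_mod_cast htriv' (x ^ q ^ i)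
  refine ⟨main, ?_⟩
  have hset : ((Finset.range (2 * m) ×ˢ Finset.range (2 * m)).filter
        (fun p => p.1 < p.2 ∧
          α.comp (powMonoidHom (q ^ p.1)) * α.comp (powMonoidHom (q ^ p.2)) = 1))
      = (Finset.range m).image (fun i => (i, i + m)) := by
    ext ⟨a, b⟩
    simp only [Finset.mem_filter, Finset.mem_product, Finset.mem_range, Finset.mem_image,
      Prod.mk.injEq]
    constructor
    · rintro ⟨⟨ha, hb⟩, hab, hcond⟩
      have hbm := (main a b hab hb).mp hcond
      exact ⟨a, by omega, rfl, hbm.symm⟩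
    · rintro ⟨i, hi, rfl, rfl⟩
      refine ⟨⟨by omega, by omega⟩, by omega, ?_⟩
      exact (main i (i + m) (by omega) (by omega)).mpr rfl
  rw [hset, Finset.card_image_of_injective, Finset.card_range]
  intro a b hab
  simpa using (Prod.mk.injEq _ _ _ _ ▸ hab).1
end

section
/- Let n ≥ 2, m = ⌊n/2⌋, and let α be a multiplicative character of the finite field k_n of cardinality q^n. The multiset {α^{q^i+q^j} : 0 ≤ i < j ≤ n−1} of characters of k_n^× is partitioned into the Frobenius-generated multisets h_1, …, h_m, where for 1 ≤ j < n/2, h_j = {(α^{1+q^j})^{q^t} : 0 ≤ t ≤ n−1} (a multiset of size n), and, if n = 2m is even, h_m = {(α^{1+q^m})^{q^t} : 0 ≤ t ≤ m−1} (a multiset of size m). In particular, binom(n,2) = (m−1)·n + size(h_m) when n is even, and binom(n,2) = m·n when n is odd. -/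
/-- the multiset `{α^{q^i+q^j} : 0 ≤ i < j ≤ n-1}` is the union of the
Frobenius-generated multisets `h_1, …, h_m` (`m = ⌊n/2⌋`), where `h_j` is generated by
`α^{1+q^j}` over `t ∈ [0,n)`, except `h_m` is generated over `t ∈ [0,m)` when `n = 2m`.
In particular `C(n,2) = (m-1)n + m` for even `n` and `C(n,2) = mn` for odd `n`. -/
theorem stmt13 (K : Type*) [Field K] [Fintype K] (q n m : ℕ) (hn : 2 ≤ n) (hm : m = n / 2)
    (hcard : Fintype.card K = q ^ n) (α : Kˣ →* ℂˣ) :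
    (((Finset.range n ×ˢ Finset.range n).filter (fun p => p.1 < p.2)).val.map
        (fun p => α.comp (powMonoidHom (q ^ p.1)) * α.comp (powMonoidHom (q ^ p.2)))
      = (Finset.Icc 1 m).val.bind
          (fun j => (Multiset.range (if n = 2 * j then m else n)).map
            (fun t => (α * α.comp (powMonoidHom (q ^ j))).comp (powMonoidHom (q ^ t))))) ∧
    (Even n → n.choose 2 = (m - 1) * n + m) ∧
    (Odd n → n.choose 2 = m * n) := by
  have hmn : m ≤ n := by omega
  refine ⟨?_, ?_, ?_⟩
  · -- main part
    have hqn : 1 ≤ q ^ n := by rw [← hcard]; exact Fintype.card_pos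
    have key : ∀ x : Kˣ, x ^ q ^ n = x := by
      intro x
      have h1 : x ^ (q ^ n - 1) = 1 := by
        have h : x ^ Nat.card Kˣ = 1 := pow_card_eq_one'
        rwa [Nat.card_units, Nat.card_eq_fintype_card, hcard] at h
      calc x ^ q ^ n = x ^ (q ^ n - 1) * x := by
            rw [← pow_succ]; congr 1; omega
        _ = x := by rw [h1, one_mul]
    set F : ℕ × ℕ → (Kˣ →* ℂˣ) :=
      fun p => α.comp (powMonoidHom (q ^ p.1)) * α.comp (powMonoidHom (q ^ p.2)) with hF
    set g : ℕ → ℕ → ℕ × ℕ := fun j t => if t + j < n then (t, t + j) else (t + j - n, t) with hg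
    have hper : ∀ (a : ℕ) (x : Kˣ), x ^ q ^ (a + n) = x ^ q ^ a := by
      intro a x
      rw [pow_add, mul_comm, pow_mul, key]
    have hcomm : ∀ j t, F (g j t)
        = (α * α.comp (powMonoidHom (q ^ j))).comp (powMonoidHom (q ^ t)) := by
      intro j t
      ext x
      by_cases h : t + j < n
      · simp only [hg, if_pos h, hF, MonoidHom.mul_apply, MonoidHom.comp_apply,
          powMonoidHom_apply]
        rw [← pow_mul, ← pow_add]
      · simp only [hg, if_neg h, hF, MonoidHom.mul_apply, MonoidHom.comp_apply,
          powMonoidHom_apply]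
        have hx : x ^ q ^ (t + j) = x ^ q ^ (t + j - n) := by
          have h1 : t + j - n + n = t + j := by omega
          conv_lhs => rw [← h1]
          exact hper _ x
        rw [← pow_mul, ← pow_add, hx, mul_comm]
    set S : Finset ((_ : ℕ) × ℕ) :=
      (Finset.Icc 1 m).sigma (fun j => Finset.range (if n = 2 * j then m else n)) with hS
    have hmem : (Finset.range n ×ˢ Finset.range n).filter (fun p => p.1 < p.2)
        = S.image (fun p => g p.1 p.2) := by
      ext ⟨i, j⟩
      simp only [Finset.mem_filter, Finset.mem_product, Finset.mem_range, Finset.mem_image,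
        hS, Finset.mem_sigma, Finset.mem_Icc, Sigma.exists]
      constructor
      · rintro ⟨⟨hi, hj⟩, hij⟩
        by_cases hd : j - i ≤ m
        · refine ⟨j - i, i, ⟨⟨by omega, hd⟩, by split <;> omega⟩, ?_⟩
          simp only [hg, if_pos (show i + (j - i) < n by omega), Prod.mk.injEq]
          exact ⟨trivial, by omega⟩
        · refine ⟨n - (j - i), j, ⟨⟨by omega, by omega⟩, by split <;> omega⟩, ?_⟩
          simp only [hg, if_neg (show ¬ j + (n - (j - i)) < n by omega), Prod.mk.injEq]
          exact ⟨by omega, trivial⟩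
      · rintro ⟨j', t, ⟨⟨hj1, hj2⟩, ht⟩, heq⟩
        have ht' : t < n := by split at ht <;> omega
        simp only [hg] at heq
        split_ifs at heq with h <;> rw [Prod.ext_iff] at heq <;> simp only at heq <;> omega
    have hinj : Set.InjOn (fun p : (_ : ℕ) × ℕ => g p.1 p.2) S := by
      rintro ⟨j1, t1⟩ h1 ⟨j2, t2⟩ h2 heq
      simp only [hS, Finset.coe_sigma, Set.mem_sigma_iff, Finset.coe_Icc, Set.mem_Icc,
        Finset.coe_range, Set.mem_Iio] at h1 h2
      obtain ⟨⟨hj1a, hj1b⟩, ht1⟩ := h1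
      obtain ⟨⟨hj2a, hj2b⟩, ht2⟩ := h2
      have hb1 : t1 < n ∧ (n = 2 * j1 → t1 < m) := by
        rcases eq_or_ne n (2 * j1) with h | h
        · rw [if_pos h] at ht1; exact ⟨by omega, fun _ => ht1⟩
        · rw [if_neg h] at ht1; exact ⟨ht1, fun hc => absurd hc h⟩
      have hb2 : t2 < n ∧ (n = 2 * j2 → t2 < m) := by
        rcases eq_or_ne n (2 * j2) with h | h
        · rw [if_pos h] at ht2; exact ⟨by omega, fun _ => ht2⟩
        · rw [if_neg h] at ht2; exact ⟨ht2, fun hc => absurd hc h⟩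
      simp only [hg] at heq
      have hjt : j1 = j2 ∧ t1 = t2 := by
        split_ifs at heq with hA hB hB <;> rw [Prod.ext_iff] at heq <;> simp only at heq
        · omega
        · exfalso
          have hn2 : n = 2 * j2 := by omega
          have := hb2.2 hn2; omega
        · exfalso
          have hn2 : n = 2 * j1 := by omega
          have := hb1.2 hn2; omega
        · omega
      obtain ⟨hj, ht⟩ := hjt
      subst hj; subst ht; rfl
    have hval : ((Finset.range n ×ˢ Finset.range n).filter (fun p => p.1 < p.2)).val
        = S.val.map (fun p => g p.1 p.2) := by
      rw [hmem, Finset.image_val_of_injOn hinj]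
    show (((Finset.range n ×ˢ Finset.range n).filter (fun p => p.1 < p.2)).val.map F) = _
    rw [hval, Multiset.map_map]
    have hSval : S.val = (Finset.Icc 1 m).val.bind
        (fun j => (Multiset.range (if n = 2 * j then m else n)).map (Sigma.mk j)) := by
      rfl
    rw [hSval, Multiset.map_bind]
    refine Multiset.bind_congr (fun j _ => ?_)
    rw [Multiset.map_map]
    refine Multiset.map_congr rfl (fun t _ => ?_)
    exact hcomm j t
  · intro he
    obtain ⟨k, hk⟩ := he
    subst hk
    have hmk : m = k := by omega
    subst hmk
    obtain ⟨k', rfl⟩ : ∃ k', m = 1 + k' := ⟨m - 1, by omega⟩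
    rw [Nat.choose_two_right]
    have h1 : (1 + k' + (1 + k')) - 1 = 2 * k' + 1 := by omega
    have h2 : (1 + k' + (1 + k')) * (2 * k' + 1) = 2 * ((1 + k') * (2 * k' + 1)) := by ring
    rw [h1, h2, Nat.mul_div_cancel_left _ (by norm_num : 0 < 2)]
    have h3 : (1 + k') - 1 = k' := by omega
    rw [h3]
    ring
  · intro ho
    obtain ⟨k, hk⟩ := ho
    subst hk
    have hmk : m = k := by omega
    subst hmk
    rw [Nat.choose_two_right]
    have h1 : (2 * m + 1) - 1 = 2 * m := by omega
    have h2 : (2 * m + 1) * (2 * m) = 2 * (m * (2 * m + 1)) := by ring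
    rw [h1, h2, Nat.mul_div_cancel_left _ (by norm_num : 0 < 2)]
end

section
/- Let n, m be positive integers, d = gcd(n,m), l = lcm(n,m). Let α be a multiplicative character of k_n^× and β a multiplicative character of k_m^×, and lift them to characters of k_l^× via the norm maps. Then the multiset {α^{q^i}·β^{q^j} : 0 ≤ i < n, 0 ≤ j < m} of characters of k_l^× equals the union over δ = 0, …, d−1 of the multisets {(α·β^{q^δ})^{q^t} : 0 ≤ t < l}. -/
-- unit fixed by q^n power when card k = q^n
lemma unit_pow_q_pow {k : Type*} [Field k] [Fintype k] {q n : ℕ}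
    (h : Fintype.card k = q ^ n) (u : kˣ) (i : ℕ) (hn : 0 < n) :
    u ^ q ^ i = u ^ q ^ (i % n) := by
  classical
  have hpos : 0 < q ^ n := h ▸ Fintype.card_pos
  have hfix : ∀ v : kˣ, v ^ q ^ n = v := by
    intro v
    have h1 : v ^ (Fintype.card k - 1) = 1 := by
      rw [← Fintype.card_units]; exact pow_card_eq_one
    calc v ^ q ^ n = v ^ (q ^ n - 1 + 1) := by rw [Nat.sub_add_cancel hpos]
    _ = v ^ (q ^ n - 1) * v := by rw [pow_succ]
    _ = v := by rw [← h, h1, one_mul]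
  have hfixk : ∀ (kk : ℕ) (v : kˣ), v ^ (q ^ n) ^ kk = v := by
    intro kk
    induction kk with
    | zero => intro v; simp
    | succ kk ih => intro v; rw [pow_succ, pow_mul, ih, hfix]
  conv_lhs => rw [← Nat.mod_add_div i n, pow_add, pow_mul, pow_mul, hfixk]

-- the combinatorial bijection
lemma pair_multiset (n m : ℕ) (hn : 0 < n) (hm : 0 < m) :
    ((Finset.range (Nat.gcd n m) ×ˢ Finset.range (Nat.lcm n m))).val.map
        (fun p => (p.2 % n, (p.2 + p.1) % m))
      = (Finset.range n ×ˢ Finset.range m).val := by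
  set d := Nat.gcd n m with hd
  set l := Nat.lcm n m with hl
  have hdpos : 0 < d := Nat.gcd_pos_of_pos_left _ hn
  have hlpos : 0 < l := Nat.lcm_pos hn hm
  set e : ℕ × ℕ → ℕ × ℕ := fun p => (p.2 % n, (p.2 + p.1) % m) with he
  -- injectivity
  have hinj : Set.InjOn e ((Finset.range d ×ˢ Finset.range l : Finset (ℕ × ℕ)) : Set (ℕ × ℕ)) := by
    rintro ⟨δ₁, t₁⟩ h₁ ⟨δ₂, t₂⟩ h₂ heq
    simp only [Finset.mem_coe, Finset.mem_product, Finset.mem_range] at h₁ h₂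
    obtain ⟨hδ₁, ht₁⟩ := h₁
    obtain ⟨hδ₂, ht₂⟩ := h₂
    simp only [he, Prod.mk.injEq] at heq
    have h1 : t₁ ≡ t₂ [MOD n] := heq.1
    have h2 : t₁ + δ₁ ≡ t₂ + δ₂ [MOD m] := heq.2
    have hδ : δ₁ ≡ δ₂ [MOD d] :=
      (h1.of_dvd (Nat.gcd_dvd_left n m)).add_left_cancel (h2.of_dvd (Nat.gcd_dvd_right n m))
    have hδeq : δ₁ = δ₂ := by
      have h' : δ₁ % d = δ₂ % d := hδ
      rwa [Nat.mod_eq_of_lt hδ₁, Nat.mod_eq_of_lt hδ₂] at h'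
    subst hδeq
    have h2' : t₁ ≡ t₂ [MOD m] := h2.add_right_cancel' δ₁
    have hteq : t₁ = t₂ := by
      have key : ∀ a b : ℕ, a < l → b < l → a ≤ b → a ≡ b [MOD n] → a ≡ b [MOD m] → a = b := by
        intro a b ha hb hab han ham
        have hdn : n ∣ b - a := (Nat.modEq_iff_dvd' hab).mp han
        have hdm : m ∣ b - a := (Nat.modEq_iff_dvd' hab).mp ham
        have : l ∣ b - a := Nat.lcm_dvd hdn hdm
        have hz : b - a = 0 := Nat.eq_zero_of_dvd_of_lt this (by omega)
        omega
      rcases le_total t₁ t₂ with h | h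
      · exact key t₁ t₂ ht₁ ht₂ h h1 h2'
      · exact (key t₂ t₁ ht₂ ht₁ h h1.symm h2'.symm).symm
    simp [hteq]
  -- image equals target
  have himg : Finset.image e (Finset.range d ×ˢ Finset.range l)
      = Finset.range n ×ˢ Finset.range m := by
    apply Finset.eq_of_subset_of_card_le
    · intro p hp
      simp only [Finset.mem_image] at hp
      obtain ⟨⟨δ, t⟩, _, rfl⟩ := hp
      simp only [he, Finset.mem_product, Finset.mem_range]
      exact ⟨Nat.mod_lt _ hn, Nat.mod_lt _ hm⟩
    · rw [Finset.card_image_of_injOn hinj]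
      simp only [Finset.card_product, Finset.card_range]
      have hgl : d * l = n * m := Nat.gcd_mul_lcm n m
      exact le_of_eq (by rw [hgl, Nat.mul_comm])
  rw [← Finset.image_val_of_injOn hinj, himg]

lemma msprod_eq_bind {α β : Type*} (s : Multiset α) (t : Multiset β) :
    s ×ˢ t = s.bind fun a => t.map (Prod.mk a) := rfl

/-- with `α`, `β` lifted to `k_l^×` via the norm maps, the multiset
`{α^{q^i}·β^{q^j} : 0 ≤ i < n, 0 ≤ j < m}` equals the union over `δ ∈ [0,d)` of the
Frobenius-generated multisets `{(α·β^{q^δ})^{q^t} : 0 ≤ t < l}`. -/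
theorem stmt14 (km kn kl : Type*) [Field km] [Field kn] [Field kl]
    [Fintype km] [Fintype kn] [Fintype kl] [Algebra km kl] [Algebra kn kl]
    (q n m d l : ℕ) (hn : 0 < n) (hm : 0 < m)
    (hd : d = Nat.gcd n m) (hl : l = Nat.lcm n m)
    (hqm : Fintype.card km = q ^ m) (hqn : Fintype.card kn = q ^ n)
    (hql : Fintype.card kl = q ^ l)
    (α : knˣ →* ℂˣ) (β : kmˣ →* ℂˣ) :
    ((Finset.range n ×ˢ Finset.range m)).val.map
        (fun p =>
          (α.comp (Units.map (Algebra.norm kn : kl →* kn))).comp (powMonoidHom (q ^ p.1)) *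
          (β.comp (Units.map (Algebra.norm km : kl →* km))).comp (powMonoidHom (q ^ p.2)))
      = (Finset.range d).val.bind
          (fun δ => (Multiset.range l).map
            (fun t =>
              ((α.comp (Units.map (Algebra.norm kn : kl →* kn))) *
                (β.comp (Units.map (Algebra.norm km : kl →* km))).comp
                  (powMonoidHom (q ^ δ))).comp (powMonoidHom (q ^ t)))) := by
  classical
  subst hd hl
  set A := α.comp (Units.map (Algebra.norm kn : kl →* kn)) with hA
  set B := β.comp (Units.map (Algebra.norm km : kl →* km)) with hB
  set f : ℕ → (klˣ →* ℂˣ) := fun i => A.comp (powMonoidHom (q ^ i)) with hfdef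
  set g : ℕ → (klˣ →* ℂˣ) := fun j => B.comp (powMonoidHom (q ^ j)) with hgdef
  have hf : ∀ i, f i = f (i % n) := by
    intro i
    ext x
    simp only [hfdef, hA, MonoidHom.comp_apply, powMonoidHom_apply, map_pow]
    rw [← map_pow α, ← map_pow α, unit_pow_q_pow hqn _ i hn]
  have hg : ∀ j, g j = g (j % m) := by
    intro j
    ext x
    simp only [hgdef, hB, MonoidHom.comp_apply, powMonoidHom_apply, map_pow]
    rw [← map_pow β, ← map_pow β, unit_pow_q_pow hqm _ j hm]
  have hrhs : ∀ δ t,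
      ((A * B.comp (powMonoidHom (q ^ δ))).comp (powMonoidHom (q ^ t)) : klˣ →* ℂˣ)
        = f t * g (t + δ) := by
    intro δ t
    ext x
    simp only [hfdef, hgdef, MonoidHom.comp_apply, MonoidHom.mul_apply,
      powMonoidHom_apply]
    rw [pow_add, pow_mul]
  simp only [hrhs]
  have hkey := pair_multiset n m hn hm
  calc ((Finset.range n ×ˢ Finset.range m)).val.map (fun p => f p.1 * g p.2)
      = (((Finset.range (Nat.gcd n m) ×ˢ Finset.range (Nat.lcm n m))).val.map
          (fun p => (p.2 % n, (p.2 + p.1) % m))).map (fun p => f p.1 * g p.2) := by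
        rw [hkey]
    _ = ((Finset.range (Nat.gcd n m) ×ˢ Finset.range (Nat.lcm n m))).val.map
          (fun p => f (p.2 % n) * g ((p.2 + p.1) % m)) := by
        rw [Multiset.map_map]; rfl
    _ = ((Finset.range (Nat.gcd n m) ×ˢ Finset.range (Nat.lcm n m))).val.map
          (fun p => f p.2 * g (p.2 + p.1)) := by
        apply Multiset.map_congr rfl
        intro p _
        rw [← hf, ← hg]
    _ = (Finset.range (Nat.gcd n m)).val.bind
          (fun δ => (Multiset.range (Nat.lcm n m)).map (fun t => f t * g (t + δ))) := by
        rw [Finset.product_val, msprod_eq_bind, Multiset.map_bind]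
        simp only [Multiset.map_map, Function.comp, Finset.range_val]
end

section
/- Let n, m be coprime positive integers, α a multiplicative character of k_n^× and β a multiplicative character of k_m^×. Then the character αβ of k_{nm}^× defined by (αβ)(x) = α(N_{k_{nm}/k_n}(x))·β(N_{k_{nm}/k_m}(x)) satisfies: the multiset {α^{q^i}β^{q^j} : 0 ≤ i < n, 0 ≤ j < m} of characters of k_{nm}^× equals the single Frobenius-generated multiset {(αβ)^{q^t} : 0 ≤ t < nm}. -/
lemma units_pow_q_mod {K : Type*} [Field K] [Fintype K] {q n : ℕ}
    (h : Fintype.card K = q ^ n) (u : Kˣ) (t : ℕ) :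
    u ^ q ^ t = u ^ q ^ (t % n) := by
  have hqn : u ^ q ^ n = u := by
    ext
    rw [Units.val_pow_eq_pow_val, ← h, FiniteField.pow_card]
  have hs : ∀ s : ℕ, u ^ (q ^ n) ^ s = u := by
    intro s
    induction s with
    | zero => simp
    | succ k ih => rw [pow_succ, pow_mul, ih, hqn]
  conv_lhs => rw [← Nat.div_add_mod t n]
  rw [pow_add, pow_mul, pow_mul, hs]

/-- for coprime `n, m` and characters `α` of `k_n^×`, `β` of `k_m^×` lifted
to `k_{nm}^×` via the norms, the multiset `{α^{q^i}β^{q^j} : 0 ≤ i < n, 0 ≤ j < m}` equals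
the single Frobenius-generated multiset `{(αβ)^{q^t} : 0 ≤ t < nm}`. -/
theorem stmt16 (km kn kl : Type*) [Field km] [Field kn] [Field kl]
    [Fintype km] [Fintype kn] [Fintype kl] [Algebra km kl] [Algebra kn kl]
    (q n m : ℕ) (hn : 0 < n) (hm : 0 < m) (hcop : Nat.Coprime n m)
    (hqm : Fintype.card km = q ^ m) (hqn : Fintype.card kn = q ^ n)
    (hql : Fintype.card kl = q ^ (n * m))
    (α : knˣ →* ℂˣ) (β : kmˣ →* ℂˣ) :
    ((Finset.range n ×ˢ Finset.range m)).val.map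
        (fun p =>
          (α.comp (Units.map (Algebra.norm kn : kl →* kn))).comp (powMonoidHom (q ^ p.1)) *
          (β.comp (Units.map (Algebra.norm km : kl →* km))).comp (powMonoidHom (q ^ p.2)))
      = (Multiset.range (n * m)).map
          (fun t =>
            ((α.comp (Units.map (Algebra.norm kn : kl →* kn))) *
              (β.comp (Units.map (Algebra.norm km : kl →* km)))).comp
                (powMonoidHom (q ^ t))) := by
  set A := α.comp (Units.map (Algebra.norm kn : kl →* kn)) with hA
  set B := β.comp (Units.map (Algebra.norm km : kl →* km)) with hB
  set F : ℕ × ℕ → (klˣ →* ℂˣ) :=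
    fun p => A.comp (powMonoidHom (q ^ p.1)) * B.comp (powMonoidHom (q ^ p.2)) with hF
  set crt : ℕ → ℕ × ℕ := fun t => (t % n, t % m) with hcrt
  -- periodicity
  have hAper : ∀ t, A.comp (powMonoidHom (q ^ t)) = A.comp (powMonoidHom (q ^ (t % n))) := by
    intro t
    ext x
    have h : (Units.map (Algebra.norm kn : kl →* kn)) (x ^ q ^ t)
        = (Units.map (Algebra.norm kn : kl →* kn)) (x ^ q ^ (t % n)) := by
      rw [map_pow, map_pow, units_pow_q_mod hqn]
    simp only [hA, MonoidHom.comp_apply, powMonoidHom_apply, h]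
  have hBper : ∀ t, B.comp (powMonoidHom (q ^ t)) = B.comp (powMonoidHom (q ^ (t % m))) := by
    intro t
    ext x
    have h : (Units.map (Algebra.norm km : kl →* km)) (x ^ q ^ t)
        = (Units.map (Algebra.norm km : kl →* km)) (x ^ q ^ (t % m)) := by
      rw [map_pow, map_pow, units_pow_q_mod hqm]
    simp only [hB, MonoidHom.comp_apply, powMonoidHom_apply, h]
  have hpoint : ∀ t, (A * B).comp (powMonoidHom (q ^ t)) = F (crt t) := by
    intro t
    rw [MonoidHom.mul_comp, hF, hcrt]
    simp only
    rw [hAper t, hBper t]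
  -- CRT bijection on ranges
  have hinj : Set.InjOn crt (Finset.range (n * m)) := by
    intro a ha b hb hab
    simp only [Finset.coe_range, Set.mem_Iio] at ha hb
    have h1 : a % n = b % n := congrArg Prod.fst hab
    have h2 : a % m = b % m := congrArg Prod.snd hab
    have : a % (n * m) = b % (n * m) :=
      (Nat.modEq_and_modEq_iff_modEq_mul hcop).mp ⟨h1, h2⟩
    rwa [Nat.mod_eq_of_lt ha, Nat.mod_eq_of_lt hb] at this
  have himg : Finset.image crt (Finset.range (n * m)) = Finset.range n ×ˢ Finset.range m := by
    apply Finset.eq_of_subset_of_card_le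
    · intro p hp
      simp only [Finset.mem_image, Finset.mem_range] at hp
      obtain ⟨t, ht, rfl⟩ := hp
      simp only [Finset.mem_product, Finset.mem_range, hcrt]
      exact ⟨Nat.mod_lt _ hn, Nat.mod_lt _ hm⟩
    · rw [Finset.card_image_of_injOn hinj]
      simp
  have hval : (Multiset.range (n * m)).map crt = (Finset.range n ×ˢ Finset.range m).val := by
    rw [← himg, Finset.image_val,
      Multiset.dedup_eq_self.mpr (Multiset.Nodup.map_on ?_ (Finset.range (n * m)).nodup),
      Finset.range_val]
    intro x hx y hy
    exact hinj (by simpa using hx) (by simpa using hy)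
  calc (Finset.range n ×ˢ Finset.range m).val.map F
      = ((Multiset.range (n * m)).map crt).map F := by rw [hval]
    _ = (Multiset.range (n * m)).map (fun t => (A * B).comp (powMonoidHom (q ^ t))) := by
        rw [Multiset.map_map]
        exact Multiset.map_congr rfl (fun t _ => (hpoint t).symm)
end
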